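/- Under the Volterra equation hypotheses and H*(n) → ∞, if t^x_n ∈ {0,…,n} is a time at which |x| attains its running maximum, i.e., |x(t^x_n)| = max_{0≤j≤n} |x(j)|, then lim_{n→∞} |x(t^x_n)| / |H(t^x_n)| = 1. -/

import Mathlib

open Filter Finset Topology

/-- Running maximum of `g` over `{1,…,n}` (value `0` when `n = 0`). -/
noncomputable def runMax1 (g : ℕ → ℝ) (n : ℕ) : ℝ :=
  if h : 1 ≤ n then (Finset.Icc 1 n).sup' (Finset.nonempty_Icc.mpr h) g else 0

/-- Running maximum of `g` over `{0,…,n}`. -/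
noncomputable def runMax0 (g : ℕ → ℝ) (n : ℕ) : ℝ :=
  (Finset.Icc 0 n).sup' (Finset.nonempty_Icc.mpr (Nat.zero_le n)) g

lemma le_runMax0 (g : ℕ → ℝ) {j n : ℕ} (h : j ≤ n) : g j ≤ runMax0 g n :=
  Finset.le_sup' g (Finset.mem_Icc.mpr ⟨Nat.zero_le _, h⟩)

lemma runMax0_le (g : ℕ → ℝ) {n : ℕ} {b : ℝ} (h : ∀ j ≤ n, g j ≤ b) : runMax0 g n ≤ b :=
  Finset.sup'_le _ _ (fun j hj => h j (Finset.mem_Icc.mp hj).2)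

lemma runMax0_mono (g : ℕ → ℝ) : Monotone (runMax0 g) := fun _ n h =>
  runMax0_le g (fun _ hj => le_runMax0 g (hj.trans h))

lemma runMax1_le (g : ℕ → ℝ) {n : ℕ} (hn : 1 ≤ n) {b : ℝ}
    (h : ∀ j, 1 ≤ j → j ≤ n → g j ≤ b) : runMax1 g n ≤ b := by
  unfold runMax1
  rw [dif_pos hn]
  exact Finset.sup'_le _ _ fun j hj => h j (Finset.mem_Icc.mp hj).1 (Finset.mem_Icc.mp hj).2

lemma sublin (f : ℝ → ℝ) (hf : Continuous f)
    (hsub : Filter.Tendsto (fun y => f y / y) (Filter.cocompact ℝ) (nhds 0)) :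
    ∀ ε > 0, ∃ C ≥ 0, ∀ y, |f y| ≤ ε * |y| + C := by
  intro ε hε
  have h : ∀ᶠ y in Filter.cocompact ℝ, |f y / y| < ε := by
    have := hsub.eventually (Metric.ball_mem_nhds (0:ℝ) hε)
    filter_upwards [this] with y hy
    rw [Real.dist_eq, sub_zero] at hy
    exact hy
  rw [Filter.eventually_iff, Filter.mem_cocompact] at h
  obtain ⟨s, hs, hss⟩ := h
  obtain ⟨M, hM⟩ := hs.isBounded.subset_closedBall 0
  have hM' : s ⊆ Metric.closedBall 0 (max M 0) :=
    hM.trans (Metric.closedBall_subset_closedBall (le_max_left _ _))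
  obtain ⟨C, hCb⟩ :=
    (isCompact_closedBall (0:ℝ) (max M 0)).exists_bound_of_continuousOn hf.continuousOn
  refine ⟨max C 0, le_max_right _ _, fun y => ?_⟩
  by_cases hy : y ∈ Metric.closedBall (0:ℝ) (max M 0)
  · have h1 : |f y| ≤ C := by simpa using hCb y hy
    have h2 : (0:ℝ) ≤ ε * |y| := by positivity
    calc |f y| ≤ max C 0 := h1.trans (le_max_left _ _)
      _ ≤ ε * |y| + max C 0 := by linarith
  · have hlt : |f y / y| < ε := hss (fun hmem => hy (hM' hmem))
    have hyM : max M 0 < |y| := by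
      simpa [Real.dist_eq] using (Metric.mem_closedBall.not.mp hy)
    have hy0 : y ≠ 0 := by
      intro h0
      rw [h0, abs_zero] at hyM
      exact absurd hyM (not_lt.mpr (le_max_right _ _))
    have : |f y| = |f y / y| * |y| := by
      rw [← abs_mul, div_mul_cancel₀ _ hy0]
    rw [this]
    have hy1 : 0 ≤ |y| := abs_nonneg _
    have := mul_le_mul_of_nonneg_right hlt.le hy1
    have h0C : (0:ℝ) ≤ max C 0 := le_max_right _ _
    linarith

lemma est (f : ℝ → ℝ) (k H x : ℕ → ℝ)
    (hk : Summable (fun j => |k j|))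
    (hx : ∀ n : ℕ, x (n + 1) = H (n + 1) + ∑ j ∈ Finset.range (n + 1), k (n - j) * f (x j))
    {ε C : ℝ} (hfC : ∀ y, |f y| ≤ ε * |y| + C) (hε : 0 ≤ ε)
    (n : ℕ) :
    |x (n+1) - H (n+1)| ≤ (∑' j, |k j|) * (ε * runMax0 (fun j => |x j|) n + C) := by
  have hX0 : (0:ℝ) ≤ runMax0 (fun j => |x j|) n :=
    (abs_nonneg (x 0)).trans (le_runMax0 (fun j => |x j|) (Nat.zero_le n))
  have hRC : (0:ℝ) ≤ ε * runMax0 (fun j => |x j|) n + C := by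
    have h1 : (0:ℝ) ≤ ε * |x 0| + C := (abs_nonneg _).trans (hfC (x 0))
    have h2 : |x 0| ≤ runMax0 (fun j => |x j|) n := le_runMax0 (fun j => |x j|) (Nat.zero_le n)
    nlinarith
  have hxn : x (n+1) - H (n+1) = ∑ j ∈ Finset.range (n+1), k (n - j) * f (x j) := by
    rw [hx n]; ring
  rw [hxn]
  calc |∑ j ∈ Finset.range (n+1), k (n - j) * f (x j)|
      ≤ ∑ j ∈ Finset.range (n+1), |k (n - j) * f (x j)| := Finset.abs_sum_le_sum_abs _ _
    _ ≤ ∑ j ∈ Finset.range (n+1), |k (n - j)| * (ε * runMax0 (fun j => |x j|) n + C) := by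
        apply Finset.sum_le_sum
        intro j hj
        rw [abs_mul]
        apply mul_le_mul_of_nonneg_left _ (abs_nonneg _)
        have hjn : |x j| ≤ runMax0 (fun j => |x j|) n :=
          le_runMax0 (fun j => |x j|) (Nat.lt_succ_iff.mp (Finset.mem_range.mp hj))
        calc |f (x j)| ≤ ε * |x j| + C := hfC _
          _ ≤ ε * runMax0 (fun j => |x j|) n + C := by nlinarith
    _ = (∑ j ∈ Finset.range (n+1), |k (n - j)|) * (ε * runMax0 (fun j => |x j|) n + C) := by
        rw [← Finset.sum_mul]
    _ ≤ (∑' j, |k j|) * (ε * runMax0 (fun j => |x j|) n + C) := by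
        apply mul_le_mul_of_nonneg_right _ hRC
        have h1 : ∑ j ∈ Finset.range (n+1), |k (n - j)| = ∑ j ∈ Finset.range (n+1), |k j| := by
          have := Finset.sum_range_reflect (fun j => |k j|) (n+1)
          simpa using this
        rw [h1]
        exact Summable.sum_le_tsum _ (fun _ _ => abs_nonneg _) hk

set_option maxHeartbeats 1000000 in
theorem stmt5
(f : ℝ → ℝ) (k H x : ℕ → ℝ) (ξ : ℝ)
    (hf : Continuous f)
    (hsub : Filter.Tendsto (fun y => f y / y) (Filter.cocompact ℝ) (nhds 0))
    (hk : Summable (fun j => |k j|))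
    (hx0 : x 0 = ξ)
    (hx : ∀ n : ℕ, x (n + 1) = H (n + 1) + ∑ j ∈ Finset.range (n + 1), k (n - j) * f (x j))
    (hH : Filter.Tendsto (fun n => runMax1 (fun j => |H j|) n) Filter.atTop Filter.atTop)
    (t : ℕ → ℕ)
    (ht : ∀ n : ℕ, t n ≤ n ∧ |x (t n)| = runMax0 (fun j => |x j|) n) :
    Filter.Tendsto (fun n => |x (t n)| / |H (t n)|) Filter.atTop (nhds 1) := by
  have hsl : ∀ ε > 0, ∃ C ≥ 0, ∀ y, |f y| ≤ ε * |y| + C := sublin f hf hsub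
  set K := ∑' j, |k j| with hKdef
  have hK0 : 0 ≤ K := tsum_nonneg fun _ => abs_nonneg _
  set X : ℕ → ℝ := fun n => runMax0 (fun j => |x j|) n with hXdef
  have hX0 : ∀ n, 0 ≤ X n := fun n =>
    (abs_nonneg (x 0)).trans (le_runMax0 (fun j => |x j|) (Nat.zero_le n))
  have hXt : ∀ n, |x (t n)| = X n := fun n => (ht n).2
  have hXmono : Monotone X := runMax0_mono _
  have hXle : ∀ {j n : ℕ}, j ≤ n → |x j| ≤ X n := fun h => le_runMax0 (fun j => |x j|) h
  have hest : ∀ (ε C : ℝ), 0 ≤ ε → (∀ y, |f y| ≤ ε * |y| + C) →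
      ∀ m : ℕ, |x (m+1) - H (m+1)| ≤ K * (ε * X m + C) :=
    fun ε C hε hfC m => est f k H x hk hx hfC hε m
  clear_value K X
  obtain ⟨C₁, hC₁0, hfC₁⟩ := hsl 1 one_pos
  have hXtop : Tendsto X atTop atTop := by
    rw [tendsto_atTop]
    intro b
    filter_upwards [hH.eventually_ge_atTop ((1 + K) * b + K * C₁ + 1),
      Filter.eventually_ge_atTop 1] with n hn hn1
    have hHle : runMax1 (fun j => |H j|) n ≤ (1 + K) * X n + K * C₁ := by
      apply runMax1_le _ hn1
      intro j hj1 hjn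
      obtain ⟨m, rfl⟩ : ∃ m, j = m + 1 := ⟨j - 1, (Nat.succ_pred_eq_of_pos hj1).symm⟩
      have h1 := hest 1 C₁ zero_le_one hfC₁ m
      have h2 : |H (m+1)| - |x (m+1)| ≤ |x (m+1) - H (m+1)| := by
        have h := abs_sub_abs_le_abs_sub (H (m+1)) (x (m+1))
        rw [abs_sub_comm] at h; linarith
      have h3 : |x (m+1)| ≤ X n := hXle hjn
      have h4 : X m ≤ X n := hXmono (by omega)
      have h5 : K * (1 * X m + C₁) ≤ K * (1 * X n + C₁) := by nlinarith
      linarith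
    nlinarith [hX0 n]
  have htn1 : ∀ᶠ n in atTop, 1 ≤ t n := by
    filter_upwards [hXtop.eventually_gt_atTop (|ξ|)] with n hn
    by_contra hc
    push_neg at hc
    have h0 : t n = 0 := by omega
    have h := hXt n
    rw [h0, hx0] at h
    rw [← h] at hn
    exact lt_irrefl _ hn
  rw [Metric.tendsto_atTop]
  intro δ hδ
  set ε := min (1/2) (δ/8) / (K + 1) with hεdef
  have hK1 : (0:ℝ) < K + 1 := by linarith
  have hε : 0 < ε := div_pos (lt_min (by norm_num) (by linarith)) hK1
  obtain ⟨C, hC0, hfC⟩ := hsl ε hε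
  set a := K * ε with hadef
  set b := K * C with hbdef
  have ha0 : 0 ≤ a := mul_nonneg hK0 hε.le
  have hb0 : 0 ≤ b := mul_nonneg hK0 hC0
  have haKm : a ≤ min (1/2) (δ/8) := by
    have h1 : a ≤ (K+1) * ε := by nlinarith
    have h2 : (K+1) * ε = min (1/2) (δ/8) := by
      rw [hεdef]; field_simp
    linarith
  have ha1 : a ≤ 1/2 := haKm.trans (min_le_left _ _)
  have ha2 : a ≤ δ/8 := haKm.trans (min_le_right _ _)
  clear_value ε a b
  have hmain : ∀ᶠ n in atTop, dist (|x (t n)| / |H (t n)|) 1 < δ := by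
    filter_upwards [htn1, hXtop.eventually_ge_atTop (8*(b+1)*(1+δ)/δ),
      hXtop.eventually_ge_atTop (8*(b+1))] with n h1 h2 h3
    obtain ⟨m, hm⟩ : ∃ m, t n = m + 1 := ⟨t n - 1, (Nat.succ_pred_eq_of_pos h1).symm⟩
    have htle := (ht n).1
    have hkey : |x (t n) - H (t n)| ≤ a * X n + b := by
      have hes := hest ε C hε.le hfC m
      rw [← hm] at hes
      have h4 : X m ≤ X n := hXmono (by omega)
      calc |x (t n) - H (t n)| ≤ K * (ε * X m + C) := hes
        _ ≤ a * X n + b := by nlinarith [hX0 m, mul_nonneg hK0 hε.le]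
    have habs : abs (X n - |H (t n)|) ≤ a * X n + b := by
      have h := abs_abs_sub_abs_le_abs_sub (x (t n)) (H (t n))
      rw [hXt n] at h
      exact h.trans hkey
    have hXb : 0 ≤ X n := hX0 n
    set h := |H (t n)| with hhdef
    clear_value h
    have hh1 : (1 - a) * X n - b ≤ h := by
      have hab := abs_le.mp habs
      nlinarith [hab.2]
    have hhpos : 0 < h := by
      nlinarith [mul_nonneg (by linarith : (0:ℝ) ≤ 1/2 - a) hXb]
    rw [Real.dist_eq, hXt n, div_sub_one (ne_of_gt hhpos), abs_div, abs_of_pos hhpos,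
      div_lt_iff₀ hhpos]
    have key1 : a * δ ≤ δ/2 := by nlinarith
    have key2 : 3*(b+1)*(1+δ) ≤ (3*δ/8) * X n := by
      have h' := mul_le_mul_of_nonneg_left h2 (by positivity : (0:ℝ) ≤ 3*δ/8)
      have he : (3*δ/8) * (8*(b+1)*(1+δ)/δ) = 3*(b+1)*(1+δ) := by
        field_simp
      linarith [h', he ▸ h']
    have key3 : δ * ((1-a) * X n - b) ≤ δ * h := mul_le_mul_of_nonneg_left hh1 hδ.le
    have hp1 : a * X n ≤ (δ/8) * X n := mul_le_mul_of_nonneg_right ha2 hXb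
    have hp2 : (a*δ) * X n ≤ (δ/2) * X n := mul_le_mul_of_nonneg_right key1 hXb
    have hgoal : a * X n + b < δ * h := by nlinarith [hp1, hp2, key2, key3, hb0, hδ]
    exact lt_of_le_of_lt habs hgoal
  exact eventually_atTop.mp hmain
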